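/- (Harmonic Ritz problem for the base shift σ = 0.) Let A ∈ ℂ^{n×n} be invertible, U ∈ ℂ^{n×k}, C = AU, and suppose W_{j+1} ∈ ℂ^{n×(j+1)s} and H̄_j ∈ ℂ^{(j+1)s×js} satisfy the block Arnoldi relation A W_j = W_{j+1} H̄_j, where W_j is the first js columns of W_{j+1}. Set V̂ = [U W_j], Ŵ = [C W_{j+1}], and let G be the block diagonal matrix with diagonal blocks I_k and H̄_j. Then for g ∈ ℂ^{k+js}, μ ∈ ℂ and y = A V̂ g, the harmonic Ritz condition that A⁻¹ y − μ y is orthogonal to every column of A V̂ holds if and only if G* Ŵ* V̂ g = μ G* Ŵ* Ŵ G g. -/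

import Mathlib

open Matrix

/-- (Harmonic Ritz problem for the base shift `σ = 0`.)  With `A`
invertible, `C = AU`, a block Arnoldi relation `A W_j = W_{j+1} H̄_j`, `V̂ = [U W_j]`,
`Ŵ = [C W_{j+1}]`, `G = blkdiag(I_k, H̄_j)` and `y = A V̂ g`, the harmonic Ritz condition
`A⁻¹ y − μ y ⟂ A V̂ eₗ` for every column `eₗ` holds iff `G* Ŵ* V̂ g = μ G* Ŵ* Ŵ G g`. -/
theorem base_shift_harmonic_ritz {n s j k : ℕ}
    (A : Matrix (Fin n) (Fin n) ℂ) (hinv : IsUnit A)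
    (U C : Matrix (Fin n) (Fin k) ℂ) (hC : C = A * U)
    (W1 : Matrix (Fin n) (Fin ((j + 1) * s)) ℂ)
    (H : Matrix (Fin ((j + 1) * s)) (Fin (j * s)) ℂ)
    (hA : A * (W1.submatrix id (Fin.castLE (Nat.mul_le_mul (Nat.le_succ j) le_rfl)))
            = W1 * H)
    (Vhat : Matrix (Fin n) (Fin k ⊕ Fin (j * s)) ℂ)
    (hV : Vhat = Matrix.fromCols U
        (W1.submatrix id (Fin.castLE (Nat.mul_le_mul (Nat.le_succ j) le_rfl))))
    (What : Matrix (Fin n) (Fin k ⊕ Fin ((j + 1) * s)) ℂ)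
    (hW : What = Matrix.fromCols C W1)
    (G : Matrix (Fin k ⊕ Fin ((j + 1) * s)) (Fin k ⊕ Fin (j * s)) ℂ)
    (hG : G = Matrix.fromBlocks (1 : Matrix (Fin k) (Fin k) ℂ) 0 0 H)
    (g : Fin k ⊕ Fin (j * s) → ℂ) (μ : ℂ) (y : Fin n → ℂ)
    (hy : y = (A * Vhat).mulVec g) :
    (∀ c : Fin k ⊕ Fin (j * s),
        ∑ p, star ((A * Vhat) p c) * ((A⁻¹.mulVec y - μ • y) p) = 0) ↔
    (Gᴴ * Whatᴴ * Vhat).mulVec g = μ • (Gᴴ * Whatᴴ * What * G).mulVec g := by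
  subst hC hV hW hG hy
  set Wj := W1.submatrix id (Fin.castLE (Nat.mul_le_mul (Nat.le_succ j) le_rfl)) with hWj
  have key : A * Matrix.fromCols U Wj
      = Matrix.fromCols (A * U) W1 * Matrix.fromBlocks (1 : Matrix (Fin k) (Fin k) ℂ) 0 0 H := by
    rw [Matrix.fromCols_mul_fromBlocks, Matrix.mul_fromCols]
    simp [hA]
  have hdet : IsUnit A.det := (Matrix.isUnit_iff_isUnit_det A).mp hinv
  have hinvmul : A⁻¹.mulVec ((A * Matrix.fromCols U Wj).mulVec g)
      = (Matrix.fromCols U Wj).mulVec g := by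
    rw [Matrix.mulVec_mulVec, ← Matrix.mul_assoc, Matrix.nonsing_inv_mul A hdet,
      Matrix.one_mul]
  have hsum : ∀ (v : Fin n → ℂ) (c : Fin k ⊕ Fin (j * s)),
      ∑ p, star ((A * Matrix.fromCols U Wj) p c) * v p
        = (A * Matrix.fromCols U Wj)ᴴ.mulVec v c := by
    intro v c
    simp [Matrix.mulVec, dotProduct, Matrix.conjTranspose_apply]
  have hMH : (A * Matrix.fromCols U Wj)ᴴ
      = (Matrix.fromBlocks (1 : Matrix (Fin k) (Fin k) ℂ) 0 0 H)ᴴ * (Matrix.fromCols (A * U) W1)ᴴ := by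
    rw [key, Matrix.conjTranspose_mul]
  have hiff : (A * Matrix.fromCols U Wj)ᴴ.mulVec ((Matrix.fromCols U Wj).mulVec g)
        = μ • (A * Matrix.fromCols U Wj)ᴴ.mulVec ((A * Matrix.fromCols U Wj).mulVec g)
      ↔ ((Matrix.fromBlocks (1 : Matrix (Fin k) (Fin k) ℂ) 0 0 H)ᴴ * (Matrix.fromCols (A * U) W1)ᴴ
            * Matrix.fromCols U Wj).mulVec g
        = μ • ((Matrix.fromBlocks (1 : Matrix (Fin k) (Fin k) ℂ) 0 0 H)ᴴ * (Matrix.fromCols (A * U) W1)ᴴ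
            * Matrix.fromCols (A * U) W1 * Matrix.fromBlocks (1 : Matrix (Fin k) (Fin k) ℂ) 0 0 H).mulVec g := by
    rw [hMH, Matrix.mulVec_mulVec, Matrix.mulVec_mulVec, key, Matrix.mul_assoc
      ((Matrix.fromBlocks (1 : Matrix (Fin k) (Fin k) ℂ) 0 0 H)ᴴ
        * (Matrix.fromCols (A * U) W1)ᴴ)]
  constructor
  · intro h
    rw [← hiff]
    have h' : (A * Matrix.fromCols U Wj)ᴴ.mulVec
        (A⁻¹.mulVec ((A * Matrix.fromCols U Wj).mulVec g)
          - μ • (A * Matrix.fromCols U Wj).mulVec g) = 0 := by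
      funext c
      rw [← hsum _ c]
      exact h c
    rw [hinvmul, Matrix.mulVec_sub, Matrix.mulVec_smul, sub_eq_zero] at h'
    exact h'
  · intro h c
    rw [hsum, hinvmul, Matrix.mulVec_sub, Matrix.mulVec_smul, hiff.mpr h,
      sub_self, Pi.zero_apply]
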